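/- Suppose all entries of Γ are nonnegative, the OSNR targets satisfy γ_i · (Σ_{j∈N} Γ_{ij}) < 1 with γ_i > 0 for every i ∈ N₂, and the parameters satisfy a_i > Σ_{j≠i, j∈N} Γ_{ij} for every i ∈ N₁. Then the stacked matrix Γ̄ is strictly diagonally dominant, i.e., |Γ̄_{ii}| > Σ_{j≠i} |Γ̄_{ij}| for every row i ∈ {1,…,N}. -/

import Mathlib

open Matrix Finset Filter Topology

section Defs

variable {m n : ℕ}

/-- Γ̃ ∈ ℝ^{m×N}: rows of the game players. Γ̃_{ii} = a_i, Γ̃_{ij} = Γ_{ij} for j ≠ i. -/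
def GammaTilde (Γ : Matrix (Fin m ⊕ Fin n) (Fin m ⊕ Fin n) ℝ) (a : Fin m → ℝ) :
    Matrix (Fin m) (Fin m ⊕ Fin n) ℝ :=
  Matrix.of fun i j => if j = Sum.inl i then a i else Γ (Sum.inl i) j

/-- Γ̂ ∈ ℝ^{n×N}: rows of the target seekers. Γ̂_{kk} = 1 - γ_kΓ_{kk}, Γ̂_{kj} = -γ_kΓ_{kj}. -/
def GammaHat (Γ : Matrix (Fin m ⊕ Fin n) (Fin m ⊕ Fin n) ℝ) (γ : Fin n → ℝ) :
    Matrix (Fin n) (Fin m ⊕ Fin n) ℝ :=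
  Matrix.of fun k j =>
    if j = Sum.inr k then 1 - γ k * Γ (Sum.inr k) (Sum.inr k) else -(γ k * Γ (Sum.inr k) j)

/-- Γ̄ ∈ ℝ^{N×N}: Γ̃ stacked above Γ̂. -/
def GammaBar (Γ : Matrix (Fin m ⊕ Fin n) (Fin m ⊕ Fin n) ℝ) (a : Fin m → ℝ) (γ : Fin n → ℝ) :
    Matrix (Fin m ⊕ Fin n) (Fin m ⊕ Fin n) ℝ :=
  Matrix.fromRows (GammaTilde Γ a) (GammaHat Γ γ)

/-- b̃ ∈ ℝ^m: b̃_i = a_iβ_i/α_i - n_{0,i}. -/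
noncomputable def bTilde (n0 : Fin m ⊕ Fin n → ℝ) (α β a : Fin m → ℝ) : Fin m → ℝ :=
  fun i => a i * β i / α i - n0 (Sum.inl i)

/-- b̂ ∈ ℝ^n: b̂_k = γ_k n_{0,k}. -/
def bHat (n0 : Fin m ⊕ Fin n → ℝ) (γ : Fin n → ℝ) : Fin n → ℝ :=
  fun k => γ k * n0 (Sum.inr k)

/-- b̄ ∈ ℝ^N: b̃ stacked above b̂. -/
noncomputable def bBar (n0 : Fin m ⊕ Fin n → ℝ) (α β a : Fin m → ℝ) (γ : Fin n → ℝ) : Fin m ⊕ Fin n → ℝ :=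
  Sum.elim (bTilde n0 α β a) (bHat n0 γ)

/-- max norm of a vector -/
noncomputable def vecNormInf {ι : Type*} [Fintype ι] (v : ι → ℝ) : ℝ := ⨆ i, |v i|

/-- induced ∞-norm of a matrix: max absolute row sum -/
noncomputable def matNormInf {ι κ : Type*} [Fintype ι] [Fintype κ] (A : Matrix ι κ ℝ) : ℝ :=
  ⨆ i, ∑ j, |A i j|

/-- iteration map of the distributed algorithm -/
noncomputable def iterMap (Γ : Matrix (Fin m ⊕ Fin n) (Fin m ⊕ Fin n) ℝ)
    (n0 : Fin m ⊕ Fin n → ℝ) (α β a : Fin m → ℝ) (γ : Fin n → ℝ) :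
    (Fin m ⊕ Fin n → ℝ) → (Fin m ⊕ Fin n → ℝ) := fun u =>
  Sum.elim
    (fun i => β i / α i -
      (1 / a i) * (n0 (Sum.inl i) + ∑ j ∈ univ.erase (Sum.inl i), Γ (Sum.inl i) j * u j))
    (fun k => (γ k / (1 - γ k * Γ (Sum.inr k) (Sum.inr k))) *
      (n0 (Sum.inr k) + ∑ j ∈ univ.erase (Sum.inr k), Γ (Sum.inr k) j * u j))

end Defs

/-- Under nonnegativity of Γ, γ_i(Σ_j Γ_{ij}) < 1 for target seekers and
a_i > Σ_{j≠i} Γ_{ij} for game players, the stacked matrix Γ̄ is strictly diagonally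
dominant: |Γ̄_{ii}| > Σ_{j≠i} |Γ̄_{ij}| for every row i. -/
theorem statement2 (m n : ℕ) (hm : 0 < m) (hn : 0 < n)
    (Γ : Matrix (Fin m ⊕ Fin n) (Fin m ⊕ Fin n) ℝ) (hΓ : ∀ i j, 0 ≤ Γ i j)
    (a : Fin m → ℝ) (γ : Fin n → ℝ)
    (hapos : ∀ i, 0 < a i) (hγpos : ∀ k, 0 < γ k)
    (hγ : ∀ k : Fin n, γ k * ∑ j, Γ (Sum.inr k) j < 1)
    (ha : ∀ i : Fin m, ∑ j ∈ univ.erase (Sum.inl i), Γ (Sum.inl i) j < a i) :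
    ∀ i : Fin m ⊕ Fin n,
      ∑ j ∈ univ.erase i, |GammaBar Γ a γ i j| < |GammaBar Γ a γ i i| := by
  intro i
  cases i with
  | inl i =>
    have h := ha i
    have : ∀ j ∈ univ.erase (Sum.inl i : Fin m ⊕ Fin n),
        |GammaBar Γ a γ (Sum.inl i) j| = Γ (Sum.inl i) j := by
      intro j hj
      rw [mem_erase] at hj
      simp [GammaBar, GammaTilde, Matrix.fromRows_apply_inl, hj.1, abs_of_nonneg (hΓ _ _)]
    rw [Finset.sum_congr rfl this]
    have hd : |GammaBar Γ a γ (Sum.inl i) (Sum.inl i)| = a i := by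
      simp [GammaBar, GammaTilde, Matrix.fromRows_apply_inl, abs_of_pos (hapos i)]
    rw [hd]; exact h
  | inr k =>
    have hγk := hγpos k
    have hsum : γ k * ∑ j, Γ (Sum.inr k) j < 1 := hγ k
    have hdiag : γ k * Γ (Sum.inr k) (Sum.inr k) < 1 := by
      have : Γ (Sum.inr k) (Sum.inr k) ≤ ∑ j, Γ (Sum.inr k) j :=
        Finset.single_le_sum (fun j _ => hΓ _ j) (mem_univ _)
      nlinarith [hΓ (Sum.inr k : Fin m ⊕ Fin n) (Sum.inr k)]
    have hoff : ∀ j ∈ univ.erase (Sum.inr k : Fin m ⊕ Fin n),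
        |GammaBar Γ a γ (Sum.inr k) j| = γ k * Γ (Sum.inr k) j := by
      intro j hj
      rw [mem_erase] at hj
      simp only [GammaBar, GammaHat, Matrix.fromRows_apply_inr, Matrix.of_apply,
        Sum.elim_inr, hj.1, if_false, abs_neg]
      exact abs_of_nonneg (mul_nonneg hγk.le (hΓ _ _))
    rw [Finset.sum_congr rfl hoff]
    have hd : |GammaBar Γ a γ (Sum.inr k) (Sum.inr k)| = 1 - γ k * Γ (Sum.inr k) (Sum.inr k) := by
      simp only [GammaBar, GammaHat, Matrix.fromRows_apply_inr, Matrix.of_apply, Sum.elim_inr, reduceIte]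
      exact abs_of_pos (by linarith)
    rw [hd]
    have hsplit : ∑ j, Γ (Sum.inr k) j
        = Γ (Sum.inr k) (Sum.inr k) + ∑ j ∈ univ.erase (Sum.inr k), Γ (Sum.inr k) j :=
      (Finset.add_sum_erase univ _ (mem_univ _)).symm
    have : ∑ j ∈ univ.erase (Sum.inr k : Fin m ⊕ Fin n), γ k * Γ (Sum.inr k) j
        = γ k * ∑ j ∈ univ.erase (Sum.inr k), Γ (Sum.inr k) j := by
      rw [Finset.mul_sum]
    rw [this]
    nlinarith
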